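/- Let μ(t) := vec(M(t)) − 𝒦·vec(ω(t)ω(t)ᵀ), where M satisfies the matrix ODE vec(Ṁ) = 𝒜·vec(M) + ℬ·vec(ωωᵀ), ω satisfies ω̇ = Sω, and 𝒦 solves 𝒜𝒦 + ℬ = 𝒦𝒮 with 𝒮 = I ⊗ S + S ⊗ I. Then μ satisfies the linear ODE μ̇ = 𝒜 μ. Consequently, if all eigenvalues of 𝒜 have negative real part, μ(t) → 0 exponentially as t → ∞, i.e. vec(M(t)) converges to 𝒦·vec(ω(t)ω(t)ᵀ). -/

import Mathlib

open Matrix Kronecker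

section Aux

open NormedSpace Nat

private lemma aux_exp_smul_one {A : Type*} [NormedRing A] [NormedAlgebra ℂ A]
    [CompleteSpace A] (c : ℂ) :
    exp (c • (1 : A)) = Complex.exp c • (1 : A) := by
  have h0 : exp (c • (1:A)) = ∑' m : ℕ, (m !⁻¹ : ℂ) • (c • (1:A)) ^ m := by
    rw [exp_eq_tsum ℂ]
  have h1 : ∀ m : ℕ, (m !⁻¹ : ℂ) • (c • (1:A)) ^ m = ((m !⁻¹ : ℂ) * c ^ m) • (1:A) := fun m => by
    rw [smul_pow, one_pow, smul_smul]
  rw [h0]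
  simp_rw [h1]
  rw [Summable.tsum_smul_const ?_]
  · congr 1
    rw [Complex.exp_eq_exp_ℂ, exp_eq_tsum ℂ]
    simp [smul_eq_mul]
  · have := expSeries_summable' (𝕂 := ℂ) (𝔸 := ℂ) c
    simpa [smul_eq_mul] using this

variable {V : Type*} [NormedAddCommGroup V] [NormedSpace ℂ V] [CompleteSpace V]

private lemma aux_exp_apply_eq_tsum (T : V →L[ℂ] V) (x : V) :
    exp T x = ∑' m : ℕ, (m !⁻¹ : ℂ) • (T ^ m) x := by
  have h0 : exp T = ∑' m : ℕ, (m !⁻¹ : ℂ) • T ^ m := by rw [exp_eq_tsum ℂ]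
  rw [h0]
  have := (ContinuousLinearMap.apply ℂ V x).map_tsum
    (f := fun m : ℕ => (m !⁻¹ : ℂ) • T ^ m) (expSeries_summable' T)
  simpa using this

private lemma aux_decay (T : V →L[ℂ] V) (lam : ℂ) (hlam : lam.re < 0) (k : ℕ) (x : V)
    (hx : ((T - lam • 1) ^ k) x = 0) :
    ∃ C : ℝ, 0 ≤ C ∧ ∀ t : ℝ, 0 ≤ t →
      ‖exp ((t : ℂ) • T) x‖ ≤ C * Real.exp (lam.re / 2 * t) := by
  set N := T - lam • (1 : V →L[ℂ] V) with hN
  set ε : ℝ := -lam.re / 2 with hε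
  have hε0 : 0 < ε := by rw [hε]; linarith
  refine ⟨∑ j ∈ Finset.range k, ε⁻¹ ^ j * ‖(N ^ j) x‖, by positivity, fun t ht => ?_⟩
  have hsplit : (t : ℂ) • T = ((t : ℂ) * lam) • (1 : V →L[ℂ] V) + (t : ℂ) • N := by
    rw [hN, smul_sub, mul_smul]
    abel
  have hcomm : Commute (((t : ℂ) * lam) • (1 : V →L[ℂ] V)) ((t : ℂ) • N) :=
    ((Commute.one_left _).smul_left _).smul_right _
  have hexp : exp ((t : ℂ) • T) = Complex.exp ((t : ℂ) * lam) • exp ((t : ℂ) • N) := by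
    rw [hsplit, NormedSpace.exp_add_of_commute_of_mem_ball (𝕂 := ℂ) hcomm (by simp [NormedSpace.expSeries_radius_eq_top]) (by simp [NormedSpace.expSeries_radius_eq_top]), aux_exp_smul_one, smul_mul_assoc, one_mul]
  have hNpow : ∀ j, k ≤ j → (N ^ j) x = 0 := by
    intro j hj
    have h1 : N ^ j = N ^ (j - k) * N ^ k := by rw [← pow_add]; congr 1; omega
    rw [h1, ContinuousLinearMap.mul_apply, hx, map_zero]
  have hfin : exp ((t : ℂ) • N) x
      = ∑ j ∈ Finset.range k, ((j !⁻¹ : ℂ) * (t : ℂ) ^ j) • (N ^ j) x := by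
    rw [aux_exp_apply_eq_tsum]
    have h2 : ∀ m : ℕ, (m !⁻¹ : ℂ) • (((t : ℂ) • N) ^ m) x
        = ((m !⁻¹ : ℂ) * (t : ℂ) ^ m) • (N ^ m) x := by
      intro m
      rw [smul_pow, ContinuousLinearMap.smul_apply, smul_smul]
    simp_rw [h2]
    exact tsum_eq_sum (fun j hj => by
      rw [hNpow j (by simpa using hj), smul_zero])
  rw [hexp, ContinuousLinearMap.smul_apply, norm_smul, hfin]
  have hnexp : ‖Complex.exp ((t : ℂ) * lam)‖ = Real.exp (t * lam.re) := by
    rw [Complex.norm_exp]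
    congr 1
    simp [Complex.mul_re]
  rw [hnexp]
  calc Real.exp (t * lam.re) * ‖∑ j ∈ Finset.range k, ((j !⁻¹ : ℂ) * (t : ℂ) ^ j) • (N ^ j) x‖
      ≤ Real.exp (t * lam.re) * ∑ j ∈ Finset.range k, (j !⁻¹ : ℝ) * t ^ j * ‖(N ^ j) x‖ := by
        refine mul_le_mul_of_nonneg_left ?_ (Real.exp_nonneg _)
        refine (norm_sum_le _ _).trans (Finset.sum_le_sum fun j _ => ?_)
        rw [norm_smul]
        apply mul_le_mul_of_nonneg_right _ (norm_nonneg _)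
        rw [norm_mul, norm_inv, norm_pow]
        simp only [Complex.norm_natCast, Complex.norm_real, Real.norm_eq_abs]
        rw [abs_of_nonneg ht]
    _ ≤ ∑ j ∈ Finset.range k, ε⁻¹ ^ j * ‖(N ^ j) x‖ * Real.exp (lam.re / 2 * t) := by
        rw [Finset.mul_sum]
        refine Finset.sum_le_sum fun j _ => ?_
        have key : Real.exp (t * lam.re) * ((j !⁻¹ : ℝ) * t ^ j) ≤
            ε⁻¹ ^ j * Real.exp (lam.re / 2 * t) := by
          have h3 : (ε * t) ^ j / (j ! : ℝ) ≤ Real.exp (ε * t) :=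
            Real.pow_div_factorial_le_exp (x := ε * t) (by positivity) j
          have h4 : (j !⁻¹ : ℝ) * t ^ j ≤ ε⁻¹ ^ j * Real.exp (ε * t) := by
            have h5 : t ^ j = ε⁻¹ ^ j * (ε * t) ^ j := by
              rw [mul_pow, ← mul_assoc, ← mul_pow, inv_mul_cancel₀ (ne_of_gt hε0), one_pow,
                one_mul]
            rw [h5, inv_mul_eq_div]
            calc ε⁻¹ ^ j * (ε * t) ^ j / (j ! : ℝ) = ε⁻¹ ^ j * ((ε * t) ^ j / (j ! : ℝ)) := by
                  ring
              _ ≤ ε⁻¹ ^ j * Real.exp (ε * t) :=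
                  mul_le_mul_of_nonneg_left h3 (by positivity)
          calc Real.exp (t * lam.re) * ((j !⁻¹ : ℝ) * t ^ j)
              ≤ Real.exp (t * lam.re) * (ε⁻¹ ^ j * Real.exp (ε * t)) :=
                mul_le_mul_of_nonneg_left h4 (Real.exp_nonneg _)
            _ = ε⁻¹ ^ j * Real.exp (lam.re / 2 * t) := by
                rw [mul_left_comm, ← Real.exp_add]
                congr 2
                rw [hε]; ring
        calc Real.exp (t * lam.re) * ((j !⁻¹ : ℝ) * t ^ j * ‖(N ^ j) x‖)
            = Real.exp (t * lam.re) * ((j !⁻¹ : ℝ) * t ^ j) * ‖(N ^ j) x‖ := by ring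
          _ ≤ ε⁻¹ ^ j * Real.exp (lam.re / 2 * t) * ‖(N ^ j) x‖ :=
              mul_le_mul_of_nonneg_right key (norm_nonneg _)
          _ = ε⁻¹ ^ j * ‖(N ^ j) x‖ * Real.exp (lam.re / 2 * t) := by ring
    _ = (∑ j ∈ Finset.range k, ε⁻¹ ^ j * ‖(N ^ j) x‖) * Real.exp (lam.re / 2 * t) := by
        rw [Finset.sum_mul]

private lemma aux_comp_ofReal {E : Type*} [NormedAddCommGroup E] [NormedSpace ℂ E]
    {f : ℂ → E} {f' : E} {z : ℝ} (hf : HasDerivAt f f' (z : ℂ)) :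
    HasDerivAt (fun t : ℝ => f (t : ℂ)) f' z := by
  have h1 := (hf.hasFDerivAt.restrictScalars ℝ).comp z Complex.ofRealCLM.hasFDerivAt
  have h2 := h1.hasDerivAt
  simpa [Function.comp_def] using h2

private lemma aux_sol (T : V →L[ℂ] V) (y : ℝ → V) (hy : ∀ t, HasDerivAt y (T (y t)) t)
    (t : ℝ) : y t = exp ((t : ℂ) • T) (y 0) := by
  set E : ℝ → (V →L[ℂ] V) := fun s => exp ((-(s : ℂ)) • T) with hE
  have hEd : ∀ s : ℝ, HasDerivAt E (-(T * exp ((-(s : ℂ)) • T))) s := by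
    intro s
    have h1 : HasDerivAt (fun z : ℂ => exp (z • T)) (T * exp (((-s : ℝ) : ℂ) • T))
        ((-s : ℝ) : ℂ) := hasDerivAt_exp_smul_const' T (((-s : ℝ)) : ℂ)
    have h2 : HasDerivAt (fun u : ℝ => exp ((u : ℂ) • T)) (T * exp (((-s : ℝ) : ℂ) • T))
        (-s : ℝ) := aux_comp_ofReal h1
    have h3 : HasDerivAt (fun u : ℝ => -u) (-1 : ℝ) s := (hasDerivAt_id s).neg
    have h4 := HasDerivAt.scomp (𝕜 := ℝ) s h2 h3
    simp only [Function.comp_def] at h4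
    rw [hE]
    simp only [Complex.ofReal_neg, neg_one_smul] at h4
    exact h4
  set L := (ContinuousLinearMap.restrictScalarsIsometry ℂ V V ℝ ℝ).toContinuousLinearMap with hL
  have hg : ∀ s : ℝ, HasDerivAt (fun u : ℝ => (E u) (y u)) 0 s := by
    intro s
    have hc : HasDerivAt (fun u : ℝ => L (E u)) (L (-(T * exp ((-(s : ℂ)) • T)))) s :=
      L.hasFDerivAt.comp_hasDerivAt s (hEd s)
    have := hc.clm_apply (hy s)
    have heq : (fun u : ℝ => (L (E u)) (y u)) = fun u : ℝ => (E u) (y u) := rfl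
    rw [heq] at this
    convert this using 1
    have hcomm : T * exp ((-(s : ℂ)) • T) = exp ((-(s : ℂ)) • T) * T :=
      ((Commute.refl T).smul_right (-(s : ℂ))).exp_right
    show (0 : V) = (L (-(T * exp ((-(s : ℂ)) • T)))) (y s) + (L (E s)) (T (y s))
    have h6 : (L (-(T * exp ((-(s : ℂ)) • T)))) (y s)
        = -((T * exp ((-(s : ℂ)) • T)) (y s)) := rfl
    have h7 : (L (E s)) (T (y s)) = (exp ((-(s : ℂ)) • T) * T) (y s) := rfl
    rw [h6, h7, ← hcomm]
    simp
  have hconst : ∀ s : ℝ, (E s) (y s) = (E 0) (y 0) := by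
    intro s
    apply is_const_of_deriv_eq_zero (f := fun u : ℝ => (E u) (y u))
    · intro u
      exact ((hg u).differentiableAt :)
    · intro u
      exact (hg u).deriv
  have h8 : (E 0) (y 0) = y 0 := by
    rw [hE]
    simp [exp_zero]
  have h9 := hconst t
  rw [h8] at h9
  have h10 : exp ((t : ℂ) • T) * exp ((-(t : ℂ)) • T) = 1 := by
    rw [← NormedSpace.exp_add_of_commute_of_mem_ball (𝕂 := ℂ)
      (((Commute.refl T).smul_left (t : ℂ)).smul_right (-(t : ℂ))) (by simp [NormedSpace.expSeries_radius_eq_top]) (by simp [NormedSpace.expSeries_radius_eq_top])]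
    rw [← add_smul]
    simp [exp_zero]
  calc y t = (exp ((t : ℂ) • T) * exp ((-(t : ℂ)) • T)) (y t) := by rw [h10]; simp
    _ = exp ((t : ℂ) • T) ((E t) (y t)) := rfl
    _ = exp ((t : ℂ) • T) (y 0) := by rw [h9]

end Aux

/-- If `vec M` solves `d/dt vec M = 𝒜 vec M + ℬ vec(ωωᵀ)`, `ω̇ = Sω`, and `𝒦` solves
`𝒜𝒦 + ℬ = 𝒦𝒮` with `𝒮 = I ⊗ S + S ⊗ I`, then `μ := vec M − 𝒦 vec(ωωᵀ)` satisfies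
`μ̇ = 𝒜μ`; if moreover `𝒜` is Hurwitz, `μ(t) → 0` exponentially as `t → ∞`. -/
theorem stmt_4 {n ν : ℕ}
    (cA : Matrix (Fin n × Fin n) (Fin n × Fin n) ℝ)
    (cB : Matrix (Fin n × Fin n) (Fin ν × Fin ν) ℝ)
    (S : Matrix (Fin ν) (Fin ν) ℝ)
    (cS : Matrix (Fin ν × Fin ν) (Fin ν × Fin ν) ℝ)
    (hS : cS = (1 : Matrix (Fin ν) (Fin ν) ℝ) ⊗ₖ S + S ⊗ₖ (1 : Matrix (Fin ν) (Fin ν) ℝ))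
    (K : Matrix (Fin n × Fin n) (Fin ν × Fin ν) ℝ)
    (hK : cA * K + cB = K * cS)
    (v : ℝ → (Fin n × Fin n) → ℝ)  -- v = vec M
    (ω : ℝ → Fin ν → ℝ)
    (q : ℝ → (Fin ν × Fin ν) → ℝ)  -- q = vec (ω ωᵀ)
    (hq : ∀ t p, q t p = ω t p.2 * ω t p.1)
    (hω : ∀ t, HasDerivAt ω (S.mulVec (ω t)) t)
    (hv : ∀ t, HasDerivAt v (cA.mulVec (v t) + cB.mulVec (q t)) t)
    (μ : ℝ → (Fin n × Fin n) → ℝ)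
    (hμ : ∀ t, μ t = v t - K.mulVec (q t)) :
    (∀ t, HasDerivAt μ (cA.mulVec (μ t)) t) ∧
    ((∀ z ∈ spectrum ℂ (cA.map Complex.ofReal), z.re < 0) →
      ∃ c > (0 : ℝ), ∃ Cst : ℝ, ∀ t ≥ (0 : ℝ), ‖μ t‖ ≤ Cst * Real.exp (-c * t)) := by
  have part1 : ∀ t, HasDerivAt μ (cA.mulVec (μ t)) t := by
    intro t
    have hqd : HasDerivAt q (cS.mulVec (q t)) t := by
      rw [hasDerivAt_pi]
      intro p
      have h1 : HasDerivAt (fun s => ω s p.2 * ω s p.1)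
          (S.mulVec (ω t) p.2 * ω t p.1 + ω t p.2 * S.mulVec (ω t) p.1) t :=
        (hasDerivAt_pi.1 (hω t) p.2).mul (hasDerivAt_pi.1 (hω t) p.1)
      have h2 : (fun s => q s p) = fun s => ω s p.2 * ω s p.1 := by
        funext s; exact hq s p
      rw [h2]
      convert h1 using 1
      · rfl
      · rfl
      obtain ⟨a, b⟩ := p
      simp only [hS, Matrix.mulVec, dotProduct, Matrix.add_apply, Matrix.kroneckerMap_apply,
        Fintype.sum_prod_type, Matrix.one_apply, hq, add_mul, ite_mul, one_mul, zero_mul,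
        Finset.sum_add_distrib, Finset.sum_ite_eq, Finset.mem_univ, if_true]
      ring_nf
      rw [Finset.sum_comm]
      congr 1
      · simp only [Finset.sum_ite_eq, Finset.mem_univ, if_true, Finset.sum_mul]
      · simp only [mul_ite, ite_mul, mul_one, mul_zero, zero_mul, one_mul,
          Finset.sum_ite_eq, Finset.mem_univ, if_true, Finset.mul_sum]
        apply Finset.sum_congr rfl; intro c _; ring
    have hKd : HasDerivAt (fun s => K.mulVec (q s)) (K.mulVec (cS.mulVec (q t))) t := by
      exact ((Matrix.mulVecLin K).toContinuousLinearMap.hasFDerivAt.comp_hasDerivAt t hqd :)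
    have hmain : HasDerivAt μ (cA.mulVec (v t) + cB.mulVec (q t) - K.mulVec (cS.mulVec (q t)))
        t := by
      have hμ' : μ = fun s => v s - K.mulVec (q s) := funext hμ
      rw [hμ']
      exact (hv t).sub hKd
    convert hmain using 1
    rw [hμ t, Matrix.mulVec_mulVec, ← hK, Matrix.add_mulVec, ← Matrix.mulVec_mulVec,
      Matrix.mulVec_sub]
    abel
  refine ⟨part1, fun hspec => ?_⟩
  classical
  -- complexify
  set A : Matrix (Fin n × Fin n) (Fin n × Fin n) ℂ := cA.map Complex.ofReal with hA
  set f : Module.End ℂ ((Fin n × Fin n) → ℂ) := Matrix.mulVecLin A with hf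
  set T : ((Fin n × Fin n) → ℂ) →L[ℂ] ((Fin n × Fin n) → ℂ) :=
    LinearMap.toContinuousLinearMap f with hT
  have hTapp : ∀ x, T x = A.mulVec x := by
    intro x
    rw [hT, LinearMap.coe_toContinuousLinearMap', hf, Matrix.mulVecLin_apply]
  set y : ℝ → (Fin n × Fin n) → ℂ := fun t p => ((μ t p : ℝ) : ℂ) with hy
  have hyd : ∀ t, HasDerivAt y (T (y t)) t := by
    intro t
    rw [hasDerivAt_pi]
    intro p
    have h1 : HasDerivAt (fun s => μ s p) (cA.mulVec (μ t) p) t := hasDerivAt_pi.1 (part1 t) p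
    have h2 := Complex.ofRealCLM.hasFDerivAt.comp_hasDerivAt t h1
    convert h2 using 1
    · rfl
    rw [hTapp]
    simp only [hy, hA, Matrix.mulVec, dotProduct, Matrix.map_apply, Complex.ofRealCLM_apply]
    push_cast
    rfl
  have hnorm : ∀ t, ‖μ t‖ = ‖y t‖ := by
    intro t
    rw [Pi.norm_def, Pi.norm_def]
    congr 1
    apply Finset.sup_congr rfl
    intro p _
    rw [hy]
    simp
  -- spectrum facts
  have hre : ∀ lam : ℂ, Module.End.HasEigenvalue f lam → lam.re < 0 := by
    intro lam hlam
    apply hspec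
    have h1 : lam ∈ spectrum ℂ f := Module.End.hasEigenvalue_iff_mem_spectrum.mp hlam
    have h2 : f = Matrix.toLinAlgEquiv' A := by
      apply LinearMap.ext
      intro x
      rw [hf, Matrix.mulVecLin_apply, Matrix.toLinAlgEquiv'_apply]
    rwa [h2, AlgEquiv.spectrum_eq] at h1
  -- decomposition into generalized eigenspaces
  have htop := Module.End.iSup_maxGenEigenspace_eq_top f
  have hmem : y 0 ∈ ⨆ lam : ℂ, f.maxGenEigenspace lam := by rw [htop]; trivial
  rw [Submodule.mem_iSup_iff_exists_finsupp] at hmem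
  obtain ⟨d, hd, hdsum⟩ := hmem
  set k0 : ℕ := Module.finrank ℂ ((Fin n × Fin n) → ℂ) with hk0
  -- CLM powers agree with End powers
  have hcoe : ∀ (lam : ℂ) (k : ℕ) (x : (Fin n × Fin n) → ℂ),
      ((T - lam • 1) ^ k) x = ((f - lam • 1) ^ k) x := by
    intro lam k
    induction k with
    | zero => intro x; simp
    | succ k ih =>
      intro x
      rw [pow_succ, pow_succ, ContinuousLinearMap.mul_apply, Module.End.mul_apply]
      have hb : (T - lam • 1) x = (f - lam • 1) x := by
        simp [hT, LinearMap.coe_toContinuousLinearMap']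
      rw [hb, ih]
  have hker : ∀ lam : ℂ, ((T - lam • 1) ^ k0) (d lam) = 0 := by
    intro lam
    have h1 : d lam ∈ f.genEigenspace lam (k0 : ℕ∞) := by
      rw [← Module.End.maxGenEigenspace_eq_genEigenspace_finrank]
      exact hd lam
    rw [Module.End.mem_genEigenspace_nat, LinearMap.mem_ker] at h1
    rw [hcoe, h1]
  have hsupp_re : ∀ lam ∈ d.support, lam.re < 0 := by
    intro lam hlam
    have hne : d lam ≠ 0 := Finsupp.mem_support_iff.mp hlam
    have h1 : d lam ∈ f.genEigenspace lam (k0 : ℕ∞) := by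
      rw [← Module.End.maxGenEigenspace_eq_genEigenspace_finrank]
      exact hd lam
    have h2 : f.HasGenEigenvalue lam k0 := by
      rw [Module.End.hasGenEigenvalue_iff]
      intro hbot
      rw [hbot] at h1
      exact hne h1
    exact hre lam (Module.End.hasEigenvalue_of_hasGenEigenvalue h2)
  -- the uniform rate
  set cs : Finset ℝ := insert (1 : ℝ) (d.support.image fun lam => -lam.re / 2) with hcs
  have hcsne : cs.Nonempty := Finset.insert_nonempty _ _
  set c : ℝ := cs.min' hcsne with hc
  have hc0 : 0 < c := by
    rw [hc, Finset.lt_min'_iff]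
    intro b hb
    rw [hcs, Finset.mem_insert] at hb
    rcases hb with hb | hb
    · rw [hb]; norm_num
    · obtain ⟨lam, hlam, rfl⟩ := Finset.mem_image.mp hb
      have := hsupp_re lam hlam
      linarith
  have hcle : ∀ lam ∈ d.support, c ≤ -lam.re / 2 := by
    intro lam hlam
    exact Finset.min'_le _ _ (Finset.mem_insert_of_mem (Finset.mem_image_of_mem _ hlam))
  -- per-eigenvalue bound
  have key : ∀ lam : ℂ, ∃ C : ℝ, 0 ≤ C ∧ ∀ t : ℝ, 0 ≤ t →
      ‖NormedSpace.exp ((t : ℂ) • T) (d lam)‖ ≤ C * Real.exp (-c * t) := by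
    intro lam
    by_cases hlam : lam ∈ d.support
    · obtain ⟨C, hC0, hC⟩ := aux_decay T lam (hsupp_re lam hlam) k0 (d lam) (hker lam)
      refine ⟨C, hC0, fun t ht => (hC t ht).trans ?_⟩
      apply mul_le_mul_of_nonneg_left _ hC0
      apply Real.exp_le_exp.2
      have h1 : c ≤ -lam.re / 2 := hcle lam hlam
      nlinarith
    · refine ⟨0, le_refl _, fun t ht => ?_⟩
      rw [Finsupp.notMem_support_iff.mp hlam]
      simp
  choose C hC0 hC using key
  refine ⟨c, hc0, ∑ lam ∈ d.support, C lam, fun t ht => ?_⟩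
  rw [hnorm t, aux_sol T y hyd t, ← hdsum]
  rw [Finsupp.sum]
  rw [map_sum]
  calc ‖∑ lam ∈ d.support, NormedSpace.exp ((t : ℂ) • T) (d lam)‖
      ≤ ∑ lam ∈ d.support, ‖NormedSpace.exp ((t : ℂ) • T) (d lam)‖ := norm_sum_le _ _
    _ ≤ ∑ lam ∈ d.support, C lam * Real.exp (-c * t) :=
        Finset.sum_le_sum fun lam _ => hC lam t ht
    _ = (∑ lam ∈ d.support, C lam) * Real.exp (-c * t) := by rw [Finset.sum_mul]
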